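/- The generalized Catalan numbers satisfy C_n^{(p)} = (1/((p-1)n+1)) · binom(pn, n) for all n ≥ 0 and p ≥ 2, where C_n^{(p)} is defined by the recursion C_0^{(p)} = 1 and C_n^{(p)} = Σ over all p-tuples (i_1,…,i_p) of nonnegative integers with i_1+…+i_p = n-1 of the product C_{i_1}^{(p)} ⋯ C_{i_p}^{(p)}. -/

import Mathlib

/-- p-ary bracketings: terms over one variable `x` with one p-ary operation symbol `ω`. -/
inductive Brack (p : ℕ) : Type
  | x : Brack p
  | node : (Fin p → Brack p) → Brack p

namespace Brack

/-- occurrence number: number of occurrences of ω -/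
def occ {p : ℕ} : Brack p → ℕ
  | .x => 0
  | .node f => 1 + ∑ i, occ (f i)

/-- length: number of occurrences of x -/
def len {p : ℕ} : Brack p → ℕ
  | .x => 1
  | .node f => ∑ i, len (f i)

/-- evaluation of a bracketing in a groupoid, variables enumerated left-to-right
starting at position `j`. -/
def evalFrom {p : ℕ} {A : Type*} (op : (Fin p → A) → A) (v : ℕ → A) :
    Brack p → ℕ → A
  | .x, j => v j
  | .node f, j =>
      op (fun i => evalFrom op v (f i)
        (j + ∑ k ∈ Finset.univ.filter (· < i), len (f k)))

/-- the term function induced by a bracketing -/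
def eval {p : ℕ} {A : Type*} (op : (Fin p → A) → A) (t : Brack p) (v : ℕ → A) : A :=
  evalFrom op v t 0

/-- prefix word of a bracketing: `true` codes ω, `false` codes x -/
def word {p : ℕ} : Brack p → List Bool
  | .x => [false]
  | .node f => true :: (List.ofFn (fun i => word (f i))).flatten

/-- auxiliary: scan a word, recording 1 + number of x's before each ω -/
def STaux : List Bool → ℕ → List ℕ
  | [], _ => []
  | true :: w, c => (c + 1) :: STaux w c
  | false :: w, c => STaux w (c + 1)

/-- insertion tuple of a bracketing: the i-th entry is one plus the number
of x's preceding the i-th occurrence of ω in the prefix notation -/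
def ST {p : ℕ} (t : Brack p) : List ℕ := STaux (word t) 0

/-- replace the i-th (0-based) occurrence of x in `t` by `s` -/
def replaceLeaf {p : ℕ} : Brack p → ℕ → Brack p → Brack p
  | .x, i, s => if i = 0 then s else .x
  | .node f, i, s => .node (fun j =>
      let off := ∑ k ∈ Finset.univ.filter (· < j), len (f k)
      if off ≤ i ∧ i < off + len (f j) then replaceLeaf (f j) (i - off) s else f j)

/-- β_i : insertion of ω x … x at the i-th (1-based) occurrence of x -/
def beta {p : ℕ} (i : ℕ) (t : Brack p) : Brack p :=
  replaceLeaf t (i - 1) (.node (fun _ => .x))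

/-- left depth: depth of leftmost leaf (binary case) -/
def dl : Brack 2 → ℕ
  | .x => 0
  | .node f => dl (f 0) + 1

/-- right depth: depth of rightmost leaf (binary case) -/
def dr : Brack 2 → ℕ
  | .x => 0
  | .node f => dr (f 1) + 1

/-- left factor of a binary bracketing -/
def leftF : Brack 2 → Brack 2
  | .x => .x
  | .node f => f 0

/-- whether a bracketing is the single variable x -/
def isX {p : ℕ} : Brack p → Bool
  | .x => true
  | .node _ => false

/-- number of pairs of eggs, i.e. subterm occurrences of ω x x (binary case) -/
def eggs : Brack 2 → ℕ
  | .x => 0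
  | .node f => (if isX (f 0) && isX (f 1) then 1 else 0) + eggs (f 0) + eggs (f 1)

end Brack

/-- generalized Catalan numbers -/
def genCat (p : ℕ) : ℕ → ℕ
  | 0 => 1
  | n + 1 =>
      ∑ v ∈ (Finset.Nat.antidiagonalTuple p n).attach, ∏ k : Fin p, genCat p (v.1 k)
  decreasing_by
    have hv := Finset.Nat.mem_antidiagonalTuple.mp v.2
    have hle : v.1 k ≤ n := by
      calc v.1 k ≤ ∑ i, v.1 i :=
            Finset.single_le_sum (fun i _ => Nat.zero_le _) (Finset.mem_univ k)
        _ = n := hv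
    omega

/-- the set M(n,k,p) of weakly increasing n-tuples of positive integers
with u_i ≤ (p-1)(i-1)+k (here indices are 0-based) -/
def Mset (n k p : ℕ) : Set (Fin n → ℕ) :=
  {u | (∀ i : Fin n, 1 ≤ u i ∧ u i ≤ (p - 1) * (i : ℕ) + k) ∧
    ∀ i j : Fin n, i ≤ j → u i ≤ u j}

section FussCatalan

open PowerSeries Finset

/-- splitting a sum over (k+1)-tuples -/
lemma tupleSum_succ (f : ℕ → ℚ) (k n : ℕ) :
    ∑ v ∈ Finset.Nat.antidiagonalTuple (k + 1) n, ∏ i, f (v i) =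
      ∑ ab ∈ Finset.HasAntidiagonal.antidiagonal n, f ab.1 *
        ∑ v ∈ Finset.Nat.antidiagonalTuple k ab.2, ∏ i, f (v i) := by
  simp_rw [Finset.mul_sum]
  rw [Finset.sum_sigma']
  refine Finset.sum_nbij' (fun v => ⟨(v 0, ∑ i : Fin k, v i.succ), Fin.tail v⟩)
    (fun x => Fin.cons x.1.1 x.2) ?_ ?_ ?_ ?_ ?_
  · intro v hv
    simp only [Finset.Nat.mem_antidiagonalTuple, Fin.sum_univ_succ] at hv
    simp only [Finset.mem_sigma, Finset.HasAntidiagonal.mem_antidiagonal,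
      Finset.Nat.mem_antidiagonalTuple]
    exact ⟨hv, rfl⟩
  · rintro ⟨⟨a, b⟩, v⟩ h
    simp only [Finset.mem_sigma, Finset.HasAntidiagonal.mem_antidiagonal,
      Finset.Nat.mem_antidiagonalTuple] at h ⊢
    rw [Fin.sum_univ_succ]
    simp only [Fin.cons_zero, Fin.cons_succ]
    rw [h.2, h.1]
  · intro v hv
    exact Fin.cons_self_tail v
  · rintro ⟨⟨a, b⟩, v⟩ h
    simp only [Finset.mem_sigma, Finset.HasAntidiagonal.mem_antidiagonal,
      Finset.Nat.mem_antidiagonalTuple] at h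
    simp [Fin.cons_zero, Fin.cons_succ, Fin.tail_cons, h.2]
  · intro v hv
    rw [Fin.prod_univ_succ]
    simp [Fin.tail]

lemma tupleSum_coeff (f : ℕ → ℚ) (k n : ℕ) :
    ∑ v ∈ Finset.Nat.antidiagonalTuple k n, ∏ i, f (v i) =
      PowerSeries.coeff n ((PowerSeries.mk f) ^ k) := by
  induction k generalizing n with
  | zero =>
    cases n with
    | zero => simp
    | succ m => simp
  | succ k ih =>
    rw [tupleSum_succ, pow_succ', PowerSeries.coeff_mul]
    refine Finset.sum_congr rfl fun ab _ => ?_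
    rw [PowerSeries.coeff_mk, ih]

/-- the Fuss–Catalan generating function -/
noncomputable def Gcat (p : ℕ) : PowerSeries ℚ :=
  PowerSeries.mk fun n => (genCat p n : ℚ)

lemma coeff_Gcat (p n : ℕ) : PowerSeries.coeff n (Gcat p) = (genCat p n : ℚ) :=
  PowerSeries.coeff_mk _ _

lemma genCat_succ (p n : ℕ) : genCat p (n + 1) =
    ∑ v ∈ Finset.Nat.antidiagonalTuple p n, ∏ k : Fin p, genCat p (v k) := by
  rw [genCat]
  exact Finset.sum_attach (Finset.Nat.antidiagonalTuple p n)
    (fun v => ∏ k : Fin p, genCat p (v k))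

lemma tupleSum_Gcat (p k n : ℕ) :
    ∑ v ∈ Finset.Nat.antidiagonalTuple k n, ∏ i, ((genCat p (v i) : ℚ)) =
      PowerSeries.coeff n ((Gcat p) ^ k) :=
  tupleSum_coeff (fun j => (genCat p j : ℚ)) k n

lemma Gcat_eq (p : ℕ) : Gcat p = 1 + PowerSeries.X * (Gcat p) ^ p := by
  ext n
  cases n with
  | zero => simp [Gcat, genCat]
  | succ m =>
    rw [map_add, PowerSeries.coeff_succ_X_mul, ← tupleSum_Gcat, coeff_Gcat, genCat_succ]
    push_cast
    simp [PowerSeries.coeff_one]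

/-- Raney numbers -/
noncomputable def Rn (p n k : ℕ) : ℚ :=
  if p * n + k = 0 then 1 else k * ((p * n + k).choose n) / (p * n + k)

lemma Rn_rec (p : ℕ) (hp : 2 ≤ p) (m k : ℕ) :
    Rn p (m + 1) (k + 1) = Rn p (m + 1) k + Rn p m (k + p) := by
  have hp0 : 0 < p := by omega
  have e1 : p * (m + 1) + (k + 1) = (p * (m + 1) + k) + 1 := by ring
  have e2 : p * m + (k + p) = p * (m + 1) + k := by ring
  have hpos : 0 < p * (m + 1) + k := by positivity
  rw [Rn, Rn, Rn, e1, e2, if_neg (by omega), if_neg (by omega), if_neg (by omega)]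
  have hP : (((p * (m + 1) + k) + 1).choose (m + 1) : ℚ) =
      ((p * (m + 1) + k).choose m : ℚ) + ((p * (m + 1) + k).choose (m + 1) : ℚ) := by
    exact_mod_cast Nat.choose_succ_succ' (p * (m + 1) + k) m
  have hMul : ((p : ℚ) * (m + 1) + k + 1) * ((p * (m + 1) + k).choose m : ℚ) =
      (((p * (m + 1) + k) + 1).choose (m + 1) : ℚ) * (m + 1) := by
    exact_mod_cast Nat.add_one_mul_choose_eq (p * (m + 1) + k) m
  have d0 : ((p * (m + 1) + k : ℕ) : ℚ) ≠ 0 := Nat.cast_ne_zero.mpr hpos.ne'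
  have d1 : (((p * (m + 1) + k) + 1 : ℕ) : ℚ) ≠ 0 := Nat.cast_ne_zero.mpr (Nat.succ_ne_zero _)
  have hQ0 : (0 : ℚ) < (p : ℚ) * ((m : ℚ) + 1) + (k : ℚ) := by exact_mod_cast hpos
  push_cast
  push_cast at hP hMul
  have e3 : (p : ℚ) * (m : ℚ) + ((k : ℚ) + (p : ℚ)) = (p : ℚ) * ((m : ℚ) + 1) + (k : ℚ) := by ring
  have e4 : (p : ℚ) * ((m : ℚ) + 1) + ((k : ℚ) + 1) =
      ((p : ℚ) * ((m : ℚ) + 1) + (k : ℚ)) + 1 := by ring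
  rw [e3, e4, ← add_div, div_eq_div_iff (by linarith) (by linarith)]
  linear_combination ((k : ℚ) * (((p : ℚ) * ((m : ℚ) + 1) + (k : ℚ)) + 1)) * hP - (p : ℚ) * hMul

lemma constCoeff_Gcat (p : ℕ) : PowerSeries.constantCoeff (Gcat p) = 1 := by
  have := coeff_Gcat p 0
  rw [PowerSeries.coeff_zero_eq_constantCoeff] at this
  rw [this]; simp [genCat]

lemma coeff_Gcat_pow (p : ℕ) (hp : 2 ≤ p) :
    ∀ n k, PowerSeries.coeff n ((Gcat p) ^ k) = Rn p n k := by
  intro n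
  induction n using Nat.strong_induction_on with
  | _ n ih =>
    intro k
    induction k with
    | zero =>
      rw [pow_zero]
      cases n with
      | zero => simp [Rn, PowerSeries.coeff_one]
      | succ m =>
        have : p * (m + 1) + 0 ≠ 0 := by positivity
        rw [Rn, if_neg this]
        simp [PowerSeries.coeff_one]
    | succ k ihk =>
      have hsplit : (Gcat p) ^ (k + 1) = (Gcat p) ^ k + PowerSeries.X * (Gcat p) ^ (k + p) := by
        calc (Gcat p) ^ (k + 1) = Gcat p * (Gcat p) ^ k := by rw [pow_succ']
          _ = (1 + PowerSeries.X * (Gcat p) ^ p) * (Gcat p) ^ k := by rw [← Gcat_eq]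
          _ = (Gcat p) ^ k + PowerSeries.X * (Gcat p) ^ (k + p) := by ring
      cases n with
      | zero =>
        rw [PowerSeries.coeff_zero_eq_constantCoeff, map_pow, constCoeff_Gcat, one_pow]
        rw [Rn, if_neg (by omega)]
        push_cast
        norm_num
        exact (div_self (by positivity)).symm
      | succ m =>
        rw [hsplit, map_add, PowerSeries.coeff_succ_X_mul, ihk, ih m (Nat.lt_succ_self m) (k + p)]
        exact (Rn_rec p hp m k).symm

end FussCatalan

theorem stmt_2 (p : ℕ) (hp : 2 ≤ p) (n : ℕ) :
    ((p - 1) * n + 1) * genCat p n = Nat.choose (p * n) n := by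
  have h1 : (genCat p n : ℚ) = Rn p n 1 := by
    rw [← coeff_Gcat, ← pow_one (Gcat p), coeff_Gcat_pow p hp n 1]
  have hd : ((p : ℚ) * n + 1) ≠ 0 := by positivity
  have hR : Rn p n 1 = ((p * n + 1).choose n : ℚ) / ((p : ℚ) * n + 1) := by
    rw [Rn, if_neg (by omega)]
    push_cast
    ring
  obtain ⟨q, rfl⟩ := Nat.exists_eq_add_of_le hp
  have hps : 2 + q - 1 = q + 1 := by omega
  rw [hps]
  have hch : ((2 + q) * n).choose n * ((2 + q) * n + 1) =
      ((2 + q) * n + 1).choose n * ((q + 1) * n + 1) := by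
    have h := Nat.choose_mul_succ_eq ((2 + q) * n) n
    have hsub : (2 + q) * n + 1 - n = (q + 1) * n + 1 := by
      have h2 : (2 + q) * n = (q + 1) * n + n := by ring
      omega
    rw [hsub] at h
    exact h
  have hcast : (((q + 1) * n + 1 : ℕ) : ℚ) * (genCat (2 + q) n : ℚ) =
      (((2 + q) * n).choose n : ℚ) := by
    rw [h1, hR, mul_div_assoc', div_eq_iff hd]
    have h := congrArg (Nat.cast (R := ℚ)) hch
    push_cast at h ⊢
    linarith [h]
  exact_mod_cast hcast
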